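/- Let H be a Hilbert space and let e_1,...,e_n be an orthonormal set in H. If V ⊆ H is a linear subspace such that for each j there exists v ∈ V with ‖e_j - v‖ < ε (where 0 < ε), then dim V ≥ n(1 - ε²). -/

import Mathlib

/-- Let `H` be a Hilbert space and `e₁, …, eₙ` an orthonormal set in `H`.
If `V ⊆ H` is a (finite-dimensional) linear subspace such that for each `j` there is `v ∈ V`
with `‖e j - v‖ < ε` (where `0 < ε`), then `dim V ≥ n (1 - ε²)`. -/
theorem orthonormal_eps_contained_dim_lower_bound
    {H : Type*} [NormedAddCommGroup H] [InnerProductSpace ℂ H] [CompleteSpace H]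
    {n : ℕ} {e : Fin n → H} (he : Orthonormal ℂ e)
    (V : Submodule ℂ H) [FiniteDimensional ℂ V]
    {ε : ℝ} (hε : 0 < ε)
    (hcont : ∀ j : Fin n, ∃ v ∈ V, ‖e j - v‖ < ε) :
    (n : ℝ) * (1 - ε ^ 2) ≤ (Module.finrank ℂ V : ℝ) := by
  classical
  set d := Module.finrank ℂ V with hd
  have b : OrthonormalBasis (Fin d) ℂ V := stdOrthonormalBasis ℂ V
  set f : Fin d → H := fun i => (b i : H) with hf
  have hfo : Orthonormal ℂ f := by
    rw [orthonormal_iff_ite]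
    intro i j
    have := orthonormal_iff_ite.mp b.orthonormal i j
    rwa [Submodule.coe_inner] at this
  -- per-j lower bound
  have key : ∀ j : Fin n, (1 : ℝ) - ε ^ 2 ≤ ∑ i, ‖(inner ℂ (f i) (e j) : ℂ)‖ ^ 2 := by
    intro j
    obtain ⟨v, hv, hvn⟩ := hcont j
    set p : H := (V.orthogonalProjectionOnto (e j) : H) with hp
    have hle : ‖e j - p‖ ≤ ‖e j - v‖ := by
      rw [hp, ← Submodule.starProjection_apply, Submodule.starProjection_minimal]
      exact ciInf_le ⟨0, fun x => by rintro ⟨y, rfl⟩; exact norm_nonneg _⟩ (⟨v, hv⟩ : V)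
    have hpyth := Submodule.orthogonalProjectionFn_norm_sq V (e j)
    rw [Submodule.orthogonalProjectionFn_eq] at hpyth
    have hej : ‖e j‖ = 1 := he.1 j
    have hnp : (1 : ℝ) - ε ^ 2 ≤ ‖p‖ ^ 2 := by
      have h1 : ‖e j - p‖ ^ 2 ≤ ε ^ 2 := by
        have := hle.trans_lt hvn
        nlinarith [norm_nonneg (e j - p)]
      nlinarith [hpyth]
    refine hnp.trans (le_of_eq ?_)
    -- compute ‖p‖² = ∑ ‖⟪f i, e j⟫‖²
    have hsum : V.orthogonalProjectionOnto (e j)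
        = ∑ i, (inner ℂ (f i) (e j) : ℂ) • b i := b.orthogonalProjectionOnto_apply_eq_sum (e j)
    have : (inner ℂ (V.orthogonalProjectionOnto (e j)) (V.orthogonalProjectionOnto (e j)) : ℂ)
        = ∑ i, (starRingEnd ℂ) (inner ℂ (f i) (e j) : ℂ) * (inner ℂ (f i) (e j) : ℂ) := by
      rw [hsum]
      simpa using b.orthonormal.inner_sum (fun i => (inner ℂ (f i) (e j) : ℂ))
        (fun i => (inner ℂ (f i) (e j) : ℂ)) Finset.univ
    have hnorm : (‖p‖ : ℝ) ^ 2 = ∑ i, ‖(inner ℂ (f i) (e j) : ℂ)‖ ^ 2 := by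
      have hre : (‖V.orthogonalProjectionOnto (e j)‖ : ℝ) ^ 2
          = RCLike.re (inner ℂ (V.orthogonalProjectionOnto (e j))
              (V.orthogonalProjectionOnto (e j)) : ℂ) := by
        rw [@norm_sq_eq_re_inner ℂ]
      have hpn : ‖p‖ = ‖V.orthogonalProjectionOnto (e j)‖ := rfl
      rw [hpn, hre, this, map_sum]
      refine Finset.sum_congr rfl fun i _ => ?_
      rw [RCLike.conj_mul]
      simp [← Complex.ofReal_pow]
    exact hnorm
  -- sum over j and use Bessel for each f i
  have hswap : ∑ j : Fin n, ∑ i : Fin d, ‖(inner ℂ (f i) (e j) : ℂ)‖ ^ 2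
      = ∑ i : Fin d, ∑ j : Fin n, ‖(inner ℂ (e j) (f i) : ℂ)‖ ^ 2 := by
    rw [Finset.sum_comm]
    exact Finset.sum_congr rfl fun i _ => Finset.sum_congr rfl fun j _ => by
      rw [norm_inner_symm]
  have hbessel : ∀ i : Fin d, ∑ j : Fin n, ‖(inner ℂ (e j) (f i) : ℂ)‖ ^ 2 ≤ 1 := by
    intro i
    have := he.sum_inner_products_le (f i) (s := Finset.univ)
    have hfn : ‖f i‖ = 1 := hfo.1 i
    rwa [hfn, one_pow] at this
  calc (n : ℝ) * (1 - ε ^ 2) = ∑ _j : Fin n, (1 - ε ^ 2) := by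
        rw [Finset.sum_const, Finset.card_univ, Fintype.card_fin, nsmul_eq_mul]
    _ ≤ ∑ j : Fin n, ∑ i : Fin d, ‖(inner ℂ (f i) (e j) : ℂ)‖ ^ 2 :=
        Finset.sum_le_sum fun j _ => key j
    _ = ∑ i : Fin d, ∑ j : Fin n, ‖(inner ℂ (e j) (f i) : ℂ)‖ ^ 2 := hswap
    _ ≤ ∑ _i : Fin d, (1 : ℝ) := Finset.sum_le_sum fun i _ => hbessel i
    _ = (d : ℝ) := by simp
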